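/- Let H be a complex Hilbert space, (a_n) a bounded sequence in B(H) with mutually orthogonal ranges and cokernels in the sense that a_n a_m* = a_n* a_m = 0 for n ≠ m, and let v = ∑ a_n (strong operator limit). If B ⊆ B(H) is a C*-subalgebra consisting of compact operators containing each a_n, then for every b ∈ B, both v b and b v belong to the norm closure of B, provided each a_n b and b a_n lies in B. -/

import Mathlib

open Filter Topology
lemma orth_sum_sq {H : Type*} [NormedAddCommGroup H] [InnerProductSpace ℂ H]
    (f : ℕ → H) (hf : ∀ n m, n ≠ m → inner ℂ (f n) (f m) = (0:ℂ)) (s : Finset ℕ) :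
    ‖∑ n ∈ s, f n‖ ^ 2 = ∑ n ∈ s, ‖f n‖ ^ 2 := by
  classical
  have h : (inner ℂ (∑ n ∈ s, f n) (∑ n ∈ s, f n) : ℂ) = ∑ n ∈ s, inner ℂ (f n) (f n) := by
    rw [sum_inner]
    refine Finset.sum_congr rfl fun n hn => ?_
    rw [inner_sum]
    exact Finset.sum_eq_single_of_mem n hn fun m _ hmn => hf n m (Ne.symm hmn)
  have h2 := congrArg (RCLike.re : ℂ →+ ℝ) h
  rw [map_sum] at h2
  simpa [inner_self_eq_norm_sq, ← Complex.ofReal_pow] using h2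

lemma star_strong_limit {H : Type*} [NormedAddCommGroup H] [InnerProductSpace ℂ H]
    [CompleteSpace H] (a : ℕ → H →L[ℂ] H)
    (horth : ∀ n m, n ≠ m → a n * star (a m) = 0)
    (v : H →L[ℂ] H)
    (hv : ∀ ξ : H, Tendsto (fun N => ∑ n ∈ Finset.range N, a n ξ) atTop (𝓝 (v ξ)))
    (M0 : ℝ) (hM0 : ∀ N : ℕ, ‖∑ n ∈ Finset.range N, a n‖ ≤ M0) (ξ : H) :
    Tendsto (fun N => (∑ n ∈ Finset.range N, star (a n)) ξ) atTop (𝓝 (star v ξ)) := by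
  set f : ℕ → H := fun n => star (a n) ξ with hfdef
  have hforth : ∀ n m, n ≠ m → inner ℂ (f n) (f m) = (0:ℂ) := by
    intro n m hnm
    have h0 : a n * star (a m) = 0 := horth n m hnm
    calc (inner ℂ (f n) (f m) : ℂ) = inner ℂ ξ (a n (star (a m) ξ)) := by
          rw [hfdef]
          simp only [ContinuousLinearMap.star_eq_adjoint]
          rw [ContinuousLinearMap.adjoint_inner_left]
      _ = inner ℂ ξ ((a n * star (a m)) ξ) := rfl
      _ = 0 := by rw [h0]; simp
  have happ : ∀ N : ℕ, (∑ n ∈ Finset.range N, star (a n)) ξ = ∑ n ∈ Finset.range N, f n := by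
    intro N; simp [hfdef, ContinuousLinearMap.sum_apply]
  have hstar : ∀ N : ℕ, (∑ n ∈ Finset.range N, star (a n))
      = star (∑ n ∈ Finset.range N, a n) := by
    intro N; rw [star_sum]
  set G : ℕ → ℝ := fun N => ∑ n ∈ Finset.range N, ‖f n‖ ^ 2 with hGdef
  have hGle : ∀ N, G N ≤ (M0 * ‖ξ‖) ^ 2 := by
    intro N
    have h1 : G N = ‖(∑ n ∈ Finset.range N, star (a n)) ξ‖ ^ 2 := by
      rw [happ, orth_sum_sq f hforth]
    rw [h1]
    have h2 : ‖(∑ n ∈ Finset.range N, star (a n)) ξ‖ ≤ M0 * ‖ξ‖ := by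
      calc ‖(∑ n ∈ Finset.range N, star (a n)) ξ‖
          ≤ ‖∑ n ∈ Finset.range N, star (a n)‖ * ‖ξ‖ := ContinuousLinearMap.le_opNorm _ _
        _ ≤ M0 * ‖ξ‖ := by
            apply mul_le_mul_of_nonneg_right _ (norm_nonneg ξ)
            rw [hstar, norm_star]; exact hM0 N
    exact pow_le_pow_left₀ (norm_nonneg _) h2 2
  have hsum : Summable (fun n => ‖f n‖ ^ 2) :=
    summable_of_sum_range_le (fun n => sq_nonneg _) hGle
  set S : ℝ := ∑' n, ‖f n‖ ^ 2 with hSdef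
  have hGS : Tendsto G atTop (𝓝 S) := hsum.hasSum.tendsto_sum_nat
  have hGmono : Monotone G := by
    intro n m hnm
    exact Finset.sum_le_sum_of_subset_of_nonneg (Finset.range_subset_range.2 hnm)
      (fun i _ _ => sq_nonneg _)
  have hGS' : ∀ N, G N ≤ S := fun N =>
    Summable.sum_le_tsum _ (fun i _ => sq_nonneg _) hsum
  have hcauchy : CauchySeq (fun N => (∑ n ∈ Finset.range N, star (a n)) ξ) := by
    apply cauchySeq_of_le_tendsto_0 (fun N => Real.sqrt (S - G N))
    · intro n m N hn hm
      wlog h : n ≤ m generalizing n m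
      · rw [dist_comm]; exact this m n hm hn (le_of_not_ge h)
      rw [dist_eq_norm, happ, happ, norm_sub_rev, ← Finset.sum_Ico_eq_sub _ h]
      have : ‖∑ i ∈ Finset.Ico n m, f i‖ ^ 2 = ∑ i ∈ Finset.Ico n m, ‖f i‖ ^ 2 :=
        orth_sum_sq f hforth _
      rw [← Real.sqrt_sq (norm_nonneg (∑ i ∈ Finset.Ico n m, f i)), this]
      apply Real.sqrt_le_sqrt
      have h1 : ∑ i ∈ Finset.Ico n m, ‖f i‖ ^ 2 = G m - G n := by
        rw [hGdef]
        simp only []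
        rw [Finset.sum_Ico_eq_sub _ h]
      rw [h1]
      have := hGmono hn
      have := hGS' m
      linarith
    · have h1 : Tendsto (fun N => S - G N) atTop (𝓝 0) := by
        have := tendsto_const_nhds (x := S) (f := atTop (α := ℕ)) |>.sub hGS
        simpa using this
      have := (Real.continuous_sqrt.tendsto 0).comp h1
      simpa [Function.comp_def] using this
  obtain ⟨w, hw⟩ := cauchySeq_tendsto_of_complete hcauchy
  have hwv : w = star v ξ := by
    apply ext_inner_right ℂ
    intro η
    have l1 : Tendsto (fun N => (inner ℂ ((∑ n ∈ Finset.range N, star (a n)) ξ) η : ℂ))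
        atTop (𝓝 (inner ℂ w η)) := hw.inner tendsto_const_nhds
    have l2 : Tendsto (fun N => (inner ℂ ((∑ n ∈ Finset.range N, star (a n)) ξ) η : ℂ))
        atTop (𝓝 (inner ℂ (star v ξ) η)) := by
      have heq : ∀ N, (inner ℂ ((∑ n ∈ Finset.range N, star (a n)) ξ) η : ℂ)
          = inner ℂ ξ ((∑ n ∈ Finset.range N, a n) η) := by
        intro N
        rw [hstar, ContinuousLinearMap.star_eq_adjoint, ContinuousLinearMap.adjoint_inner_left]
      have h3 : Tendsto (fun N => (inner ℂ ξ ((∑ n ∈ Finset.range N, a n) η) : ℂ))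
          atTop (𝓝 (inner ℂ ξ (v η))) := by
        apply Filter.Tendsto.inner tendsto_const_nhds
        simpa [ContinuousLinearMap.sum_apply] using hv η
      have h4 : (inner ℂ (star v ξ) η : ℂ) = inner ℂ ξ (v η) := by
        rw [ContinuousLinearMap.star_eq_adjoint, ContinuousLinearMap.adjoint_inner_left]
      rw [h4]
      simpa only [heq] using h3
    exact tendsto_nhds_unique l1 l2
  rwa [hwv] at hw

lemma key_lemma {H : Type*} [NormedAddCommGroup H] [InnerProductSpace ℂ H]
    (T : ℕ → H →L[ℂ] H) (M : ℝ) (hM : ∀ N, ‖T N‖ ≤ M)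
    (hT : ∀ ξ : H, Tendsto (fun N => T N ξ) atTop (𝓝 0))
    (K : H →L[ℂ] H) (hK : IsCompactOperator K) :
    Tendsto (fun N => (T N).comp K) atTop (𝓝 0) := by
  rw [NormedAddCommGroup.tendsto_nhds_zero]
  intro ε hε
  set M' := max M 1 with hM'def
  have hM'pos : (0:ℝ) < M' := lt_of_lt_of_le one_pos (le_max_right _ _)
  set δ := ε / (4 * M') with hδdef
  have hδ : 0 < δ := by positivity
  have hS : IsCompact (closure (K '' Metric.closedBall 0 1)) :=
    hK.isCompact_closure_image_closedBall (𝕜₁ := ℂ) (f := (K : H →ₗ[ℂ] H)) 1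
  obtain ⟨t, _, hcover⟩ := hS.elim_nhds_subcover (fun y => Metric.ball y δ)
    (fun y _ => Metric.ball_mem_nhds y hδ)
  have hev : ∀ᶠ N in atTop, ∀ y ∈ t, ‖T N y‖ < ε / 4 := by
    rw [Filter.eventually_all_finset]
    intro y _
    have h1 : Tendsto (fun N => ‖T N y‖) atTop (𝓝 0) := by
      simpa using (hT y).norm
    exact h1.eventually_lt_const (by positivity)
  filter_upwards [hev] with N hN
  have hbound : ∀ ξ : H, ‖ξ‖ ≤ 1 → ‖T N (K ξ)‖ ≤ ε / 2 := by
    intro ξ hξ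
    have hmem : K ξ ∈ closure (K '' Metric.closedBall 0 1) :=
      subset_closure ⟨ξ, by simpa [Metric.mem_closedBall] using hξ, rfl⟩
    obtain ⟨y, hyt, hy⟩ := Set.mem_iUnion₂.1 (hcover hmem)
    have hdist : ‖K ξ - y‖ < δ := by
      rwa [Metric.mem_ball, dist_eq_norm] at hy
    have h1 : ‖T N (K ξ - y)‖ ≤ M' * δ := by
      calc ‖T N (K ξ - y)‖ ≤ ‖T N‖ * ‖K ξ - y‖ := (T N).le_opNorm _
        _ ≤ M' * δ := by
            apply mul_le_mul ((hM N).trans (le_max_left _ _)) hdist.le (norm_nonneg _)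
              (le_of_lt hM'pos)
    have hMδ : M' * δ = ε / 4 := by
      rw [hδdef]; field_simp
    have h2 : ‖T N y‖ < ε / 4 := hN y hyt
    calc ‖T N (K ξ)‖ = ‖T N (K ξ - y) + T N y‖ := by rw [← map_add, sub_add_cancel]
      _ ≤ ‖T N (K ξ - y)‖ + ‖T N y‖ := norm_add_le _ _
      _ ≤ ε / 4 + ε / 4 := add_le_add (hMδ ▸ h1) h2.le
      _ = ε / 2 := by ring
  have hopn : ‖(T N).comp K‖ ≤ ε / 2 := by
    apply ContinuousLinearMap.opNorm_le_bound _ (by positivity)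
    intro x
    rcases eq_or_ne x 0 with rfl | hx
    · simp
    · have hnx : (0:ℝ) < ‖x‖ := norm_pos_iff.2 hx
      set ξ := (‖x‖⁻¹ : ℂ) • x with hξdef
      have hξ1 : ‖ξ‖ ≤ 1 := by
        rw [hξdef, norm_smul]
        simp [hnx.ne', inv_mul_cancel₀ hnx.ne']
      have hxξ : x = (‖x‖ : ℂ) • ξ := by
        rw [hξdef, smul_smul]
        norm_cast
        rw [mul_inv_cancel₀ hnx.ne', one_smul]
      calc ‖((T N).comp K) x‖ = ‖(‖x‖:ℂ)‖ * ‖T N (K ξ)‖ := by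
            conv_lhs => rw [hxξ]
            rw [ContinuousLinearMap.comp_apply, map_smul, map_smul, norm_smul]
        _ ≤ ‖x‖ * (ε / 2) := by
            simp only [Complex.norm_real, Real.norm_eq_abs, abs_of_nonneg (norm_nonneg x)]
            exact mul_le_mul_of_nonneg_left (hbound ξ hξ1) (norm_nonneg x)
        _ = (ε / 2) * ‖x‖ := by ring
  linarith

/-- Let `(a n)` be a bounded sequence in `B(H)` with
`a n * (a m)* = (a n)* * a m = 0` for `n ≠ m`, and let `v` be the strong operator limit of
`∑ a n`.  If `B ⊆ B(H)` is a C*-subalgebra consisting of compact operators which contains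
each `a n`, then for every `b ∈ B` with `a n * b ∈ B` and `b * a n ∈ B` for all `n`, both
`v * b` and `b * v` lie in the norm closure of `B`. -/
theorem stmt2 {H : Type*} [NormedAddCommGroup H] [InnerProductSpace ℂ H] [CompleteSpace H]
    (a : ℕ → H →L[ℂ] H) (C : ℝ) (hbdd : ∀ n, ‖a n‖ ≤ C)
    (horth : ∀ n m, n ≠ m → a n * star (a m) = 0 ∧ star (a n) * a m = 0)
    (v : H →L[ℂ] H)
    (hv : ∀ ξ : H, Tendsto (fun N => ∑ n ∈ Finset.range N, a n ξ) atTop (𝓝 (v ξ)))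
    (B : NonUnitalStarSubalgebra ℂ (H →L[ℂ] H)) (hBclosed : IsClosed (B : Set (H →L[ℂ] H)))
    (hBcpt : ∀ b ∈ B, IsCompactOperator b)
    (ha : ∀ n, a n ∈ B)
    (b : H →L[ℂ] H) (hb : b ∈ B)
    (hab : ∀ n, a n * b ∈ B ∧ b * a n ∈ B) :
    v * b ∈ closure (B : Set (H →L[ℂ] H)) ∧ b * v ∈ closure (B : Set (H →L[ℂ] H)) := by
  set s : ℕ → H →L[ℂ] H := fun N => ∑ n ∈ Finset.range N, a n with hsdef
  have hpt : ∀ ξ : H, ∃ C', ∀ N, ‖s N ξ‖ ≤ C' := by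
    intro ξ
    have h1 : Tendsto (fun N => ‖s N ξ‖) atTop (𝓝 ‖v ξ‖) := by
      have := (hv ξ).norm
      simpa [hsdef, ContinuousLinearMap.sum_apply] using this
    obtain ⟨C0, hC0⟩ := h1.bddAbove_range
    exact ⟨C0, fun N => hC0 ⟨N, rfl⟩⟩
  obtain ⟨M0, hM0⟩ := banach_steinhaus hpt
  constructor
  · have hTpt : ∀ ξ : H, Tendsto (fun N => (s N - v) ξ) atTop (𝓝 0) := by
      intro ξ
      have h1 : Tendsto (fun N => s N ξ) atTop (𝓝 (v ξ)) := by
        simpa [hsdef, ContinuousLinearMap.sum_apply] using hv ξ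
      simpa [ContinuousLinearMap.sub_apply] using tendsto_sub_nhds_zero_iff.2 h1
    have hTbd : ∀ N, ‖s N - v‖ ≤ M0 + ‖v‖ := fun N =>
      (norm_sub_le _ _).trans (add_le_add (hM0 N) le_rfl)
    have hkey := key_lemma (fun N => s N - v) (M0 + ‖v‖) hTbd hTpt b (hBcpt b hb)
    have heq : (fun N => (s N - v).comp b) = fun N => s N * b - v * b := by
      funext N; rfl
    rw [heq] at hkey
    have hkey' : Tendsto (fun N => s N * b) atTop (𝓝 (v * b)) :=
      tendsto_sub_nhds_zero_iff.1 hkey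
    apply mem_closure_of_tendsto hkey'
    filter_upwards with N
    have h2 : s N * b = ∑ n ∈ Finset.range N, a n * b := by
      simp only [hsdef, Finset.sum_mul]
    rw [h2]
    exact sum_mem fun n _ => (hab n).1
  · set t : ℕ → H →L[ℂ] H := fun N => ∑ n ∈ Finset.range N, star (a n) with htdef
    have hts : ∀ N, t N = star (s N) := by
      intro N; rw [htdef, hsdef]; simp [star_sum]
    have hstar_lim : ∀ ξ : H, Tendsto (fun N => t N ξ) atTop (𝓝 (star v ξ)) := fun ξ =>
      star_strong_limit a (fun n m h => (horth n m h).1) v hv M0 hM0 ξ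
    have hTpt : ∀ ξ : H, Tendsto (fun N => (t N - star v) ξ) atTop (𝓝 0) := by
      intro ξ
      simpa [ContinuousLinearMap.sub_apply] using tendsto_sub_nhds_zero_iff.2 (hstar_lim ξ)
    have hTbd : ∀ N, ‖t N - star v‖ ≤ M0 + ‖star v‖ := by
      intro N
      refine (norm_sub_le _ _).trans (add_le_add ?_ le_rfl)
      rw [hts, norm_star]; exact hM0 N
    have hkey := key_lemma (fun N => t N - star v) (M0 + ‖star v‖) hTbd hTpt (star b)
      (hBcpt (star b) (star_mem hb))
    have heq : (fun N => (t N - star v).comp (star b))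
        = fun N => t N * star b - star v * star b := by
      funext N; rfl
    rw [heq] at hkey
    have hkey' : Tendsto (fun N => t N * star b) atTop (𝓝 (star v * star b)) :=
      tendsto_sub_nhds_zero_iff.1 hkey
    have hkey'' : Tendsto (fun N => star (t N * star b)) atTop (𝓝 (star (star v * star b))) :=
      (continuous_star.tendsto _).comp hkey'
    have h1 : (fun N => star (t N * star b)) = fun N => b * s N := by
      funext N
      rw [star_mul, star_star, hts, star_star]
    have h2 : star (star v * star b) = b * v := by
      rw [star_mul, star_star, star_star]
    rw [h1, h2] at hkey''
    apply mem_closure_of_tendsto hkey''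
    filter_upwards with N
    have h3 : b * s N = ∑ n ∈ Finset.range N, b * a n := by
      simp only [hsdef, Finset.mul_sum]
    rw [h3]
    exact sum_mem fun n _ => (hab n).2
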